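/- Let 1/2 < α < 1, β = 1 − α, let t be real, and for z > 1 set δ_z = t·log z − arctan(t/β). Let 1 < w < v be reals such that |θ(u) − u| ≤ 2·√u for all u ∈ [w,v] (this holds in particular when 1427 ≤ w < v ≤ 10^19). Then W(v,w,t)·log v ≥ (v^β − w^β)/β − ( v^β·cos δ_v − w^β·cos δ_w )/√(β² + t²) − 4·( v^{1/2−α} + w^{1/2−α} ) − 2·( α + √(α² + t²) )·( w^{1/2−α} − v^{1/2−α} )/( α − 1/2 ). -/

import Mathlib

/-- Chebyshev's function `θ(x) = ∑_{p ≤ x, p prime} log p`. -/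
noncomputable def theta (x : ℝ) : ℝ :=
  ∑ p ∈ (Finset.range (⌊x⌋₊ + 1)).filter Nat.Prime, Real.log p

/-- `W(v,w,t) = ∑_{w < p ≤ v, p prime} (1 - cos(t log p))/p^α`. -/
noncomputable def W (α v w t : ℝ) : ℝ :=
  ∑ p ∈ (Finset.range (⌊v⌋₊ + 1)).filter (fun p : ℕ => Nat.Prime p ∧ w < (p : ℝ)),
    (1 - Real.cos (t * Real.log p)) / (p : ℝ) ^ α

open Real MeasureTheory intervalIntegral

noncomputable def cfun : ℕ → ℝ := fun n => if Nat.Prime n then Real.log n else 0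

lemma aux_theta_eq (x : ℝ) : ∑ k ∈ Finset.Icc 0 ⌊x⌋₊, cfun k = theta x := by
  rw [theta, Finset.sum_filter, show Finset.Icc 0 ⌊x⌋₊ = Finset.range (⌊x⌋₊ + 1) by
    ext k; simp [Nat.lt_succ_iff]]
  rfl

lemma aux_theta_mono : Monotone theta := by
  intro x y hxy
  apply Finset.sum_le_sum_of_subset_of_nonneg
  · apply Finset.filter_subset_filter
    exact Finset.range_subset_range.mpr (by have := Nat.floor_le_floor hxy; omega)
  · intro p hp _
    simp only [Finset.mem_filter] at hp
    exact Real.log_nonneg (by exact_mod_cast hp.2.one_lt.le)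

lemma aux_theta_nonneg (x : ℝ) : 0 ≤ theta x := by
  apply Finset.sum_nonneg
  intro p hp
  simp only [Finset.mem_filter] at hp
  exact Real.log_nonneg (by exact_mod_cast hp.2.one_lt.le)

lemma aux_sum_eq (g : ℝ → ℝ) {w : ℝ} (v : ℝ) (hw : 0 < w) :
    ∑ k ∈ Finset.Ioc ⌊w⌋₊ ⌊v⌋₊, g k * cfun k =
      ∑ p ∈ (Finset.range (⌊v⌋₊ + 1)).filter (fun p : ℕ => Nat.Prime p ∧ w < (p : ℝ)),
        g p * Real.log p := by
  rw [show Finset.Ioc ⌊w⌋₊ ⌊v⌋₊ = (Finset.range (⌊v⌋₊ + 1)).filter (fun k => ⌊w⌋₊ < k) by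
    ext k; simp [Nat.lt_succ_iff, and_comm], Finset.sum_filter, Finset.sum_filter]
  apply Finset.sum_congr rfl
  intro k _
  by_cases hp : Nat.Prime k
  · simp only [cfun, hp, if_true, true_and]
    simp [Nat.floor_lt hw.le]
  · simp [cfun, hp]

lemma aux_hasDerivAt_f (α t : ℝ) {u : ℝ} (hu : 0 < u) :
    HasDerivAt (fun u : ℝ => (1 - Real.cos (t * Real.log u)) * u ^ (-α))
      ((t * Real.sin (t * Real.log u) - α * (1 - Real.cos (t * Real.log u))) * u ^ (-α - 1)) u := by
  have hlog : HasDerivAt (fun u : ℝ => t * Real.log u) (t * u⁻¹) u :=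
    (Real.hasDerivAt_log hu.ne').const_mul t
  have hcos : HasDerivAt (fun u : ℝ => 1 - Real.cos (t * Real.log u))
      (Real.sin (t * Real.log u) * (t * u⁻¹)) u := by
    have h := ((Real.hasDerivAt_cos (t * Real.log u)).comp u hlog).const_sub 1
    simpa using h
  have hpow : HasDerivAt (fun u : ℝ => u ^ (-α)) ((-α) * u ^ (-α - 1)) u :=
    Real.hasDerivAt_rpow_const (Or.inl hu.ne')
  have h := hcos.mul hpow
  refine h.congr_deriv ?_
  have h1 : u ^ (-α - 1) = u ^ (-α) * u⁻¹ := by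
    rw [Real.rpow_sub hu, Real.rpow_one, div_eq_mul_inv]
  rw [h1]; ring

lemma aux_hasDerivAt_F (α β t : ℝ) (hβ : β = 1 - α) (hβ0 : 0 < β) {u : ℝ} (hu : 0 < u) :
    HasDerivAt (fun u : ℝ => u ^ β / β -
        (β * (u ^ β * Real.cos (t * Real.log u)) + t * (u ^ β * Real.sin (t * Real.log u))) /
          (β ^ 2 + t ^ 2))
      ((1 - Real.cos (t * Real.log u)) * u ^ (-α)) u := by
  have hlog : HasDerivAt (fun u : ℝ => t * Real.log u) (t * u⁻¹) u :=
    (Real.hasDerivAt_log hu.ne').const_mul t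
  have hc : HasDerivAt (fun u : ℝ => Real.cos (t * Real.log u))
      (-Real.sin (t * Real.log u) * (t * u⁻¹)) u :=
    hlog.cos
  have hs : HasDerivAt (fun u : ℝ => Real.sin (t * Real.log u))
      (Real.cos (t * Real.log u) * (t * u⁻¹)) u :=
    hlog.sin
  have hp : HasDerivAt (fun u : ℝ => u ^ β) (β * u ^ (β - 1)) u :=
    Real.hasDerivAt_rpow_const (Or.inl hu.ne')
  have h := ((hp.div_const β).sub
    ((((hp.mul hc).const_mul β).add ((hp.mul hs).const_mul t)).div_const (β ^ 2 + t ^ 2)))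
  refine h.congr_deriv ?_
  have hb2 : (0:ℝ) < β ^ 2 + t ^ 2 := by positivity
  have h1 : u ^ (β - 1) = u ^ β * u⁻¹ := by
    rw [Real.rpow_sub hu, Real.rpow_one, div_eq_mul_inv]
  have h2 : u ^ (-α) = u ^ β * u⁻¹ := by
    rw [← h1]; congr 1; rw [hβ]; ring
  rw [h1, h2]
  have hc2 : Real.cos (t * Real.log u) ^ 2 + Real.sin (t * Real.log u) ^ 2 = 1 := by
    rw [add_comm]; exact Real.sin_sq_add_cos_sq _
  field_simp
  nlinarith [hc2, sq_nonneg (Real.cos (t * Real.log u)), sq_nonneg t]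

lemma aux_cosdel (β t : ℝ) (hβ : 0 < β) (x : ℝ) :
    (β * Real.cos x + t * Real.sin x) / (β ^ 2 + t ^ 2) =
      Real.cos (x - Real.arctan (t / β)) / Real.sqrt (β ^ 2 + t ^ 2) := by
  have hb2 : (0:ℝ) < β ^ 2 + t ^ 2 := by positivity
  have hs : 0 < Real.sqrt (β ^ 2 + t ^ 2) := Real.sqrt_pos.mpr hb2
  have hsq : Real.sqrt (β ^ 2 + t ^ 2) ^ 2 = β ^ 2 + t ^ 2 := Real.sq_sqrt hb2.le
  have h1 : Real.sqrt (1 + (t / β) ^ 2) = Real.sqrt (β ^ 2 + t ^ 2) / β := by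
    rw [show (1:ℝ) + (t / β) ^ 2 = (β ^ 2 + t ^ 2) / β ^ 2 by field_simp,
      Real.sqrt_div hb2.le, Real.sqrt_sq hβ.le]
  rw [Real.cos_sub, Real.cos_arctan, Real.sin_arctan, h1]
  field_simp
  rw [hsq]

set_option maxHeartbeats 1000000 in
theorem stmt_11 (α β t w v : ℝ) (hα1 : 1 / 2 < α) (hα2 : α < 1) (hβ : β = 1 - α)
    (hw : 1 < w) (hwv : w < v)
    (hθ : ∀ u ∈ Set.Icc w v, |theta u - u| ≤ 2 * Real.sqrt u) :
    W α v w t * Real.log v ≥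
      (v ^ β - w ^ β) / β -
        (v ^ β * Real.cos (t * Real.log v - Real.arctan (t / β)) -
          w ^ β * Real.cos (t * Real.log w - Real.arctan (t / β))) /
          Real.sqrt (β ^ 2 + t ^ 2) -
        4 * (v ^ (1 / 2 - α) + w ^ (1 / 2 - α)) -
        2 * (α + Real.sqrt (α ^ 2 + t ^ 2)) *
          (w ^ (1 / 2 - α) - v ^ (1 / 2 - α)) / (α - 1 / 2) := by
  have hw0 : (0:ℝ) < w := lt_trans one_pos hw
  have hv1 : 1 < v := hw.trans hwv
  have hv0 : (0:ℝ) < v := lt_trans one_pos hv1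
  have hα0 : (0:ℝ) < α := by linarith
  have hβ0 : 0 < β := by rw [hβ]; linarith
  set K := α + Real.sqrt (α ^ 2 + t ^ 2) with hK
  have hKpos : 0 < K := by
    have := Real.sqrt_nonneg (α ^ 2 + t ^ 2); rw [hK]; linarith
  set f : ℝ → ℝ := fun u => (1 - Real.cos (t * Real.log u)) * u ^ (-α) with hf_def
  set f' : ℝ → ℝ := fun u =>
    (t * Real.sin (t * Real.log u) - α * (1 - Real.cos (t * Real.log u))) * u ^ (-α - 1)
    with hf'_def
  set F : ℝ → ℝ := fun u => u ^ β / β -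
      (β * (u ^ β * Real.cos (t * Real.log u)) + t * (u ^ β * Real.sin (t * Real.log u))) /
        (β ^ 2 + t ^ 2) with hF_def
  have hfd : ∀ u : ℝ, 0 < u → HasDerivAt f (f' u) u := fun u hu => aux_hasDerivAt_f α t hu
  have hFd : ∀ u : ℝ, 0 < u → HasDerivAt F (f u) u := fun u hu =>
    aux_hasDerivAt_F α β t hβ hβ0 hu
  have hderiv : ∀ u : ℝ, 0 < u → deriv f u = f' u := fun u hu => (hfd u hu).deriv
  -- continuity of f'
  have hlogc : ContinuousOn (fun u : ℝ => t * Real.log u) (Set.Icc w v) :=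
    continuousOn_const.mul (Real.continuousOn_log.mono (fun u hu => by
      simp only [Set.mem_compl_iff, Set.mem_singleton_iff]
      have h1 := hu.1; intro h; rw [h] at h1; linarith))
  have hcontf' : ContinuousOn f' (Set.Icc w v) := by
    apply ContinuousOn.mul
    · exact (continuousOn_const.mul (Real.continuous_sin.comp_continuousOn hlogc)).sub
        (continuousOn_const.mul
          (continuousOn_const.sub (Real.continuous_cos.comp_continuousOn hlogc)))
    · exact continuousOn_id.rpow_const
        (fun u hu => Or.inl (ne_of_gt (lt_of_lt_of_le hw0 hu.1)))
  -- pointwise bound on f'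
  have habs_trig : ∀ x : ℝ, |α * Real.cos x + t * Real.sin x| ≤ Real.sqrt (α ^ 2 + t ^ 2) := by
    intro x
    rw [← Real.sqrt_sq_eq_abs]
    apply Real.sqrt_le_sqrt
    nlinarith [sq_nonneg (α * Real.sin x - t * Real.cos x), Real.sin_sq_add_cos_sq x]
  have hf'bound : ∀ u : ℝ, 0 < u → |f' u| ≤ K * u ^ (-α - 1) := by
    intro u hu
    rw [hf'_def]
    rw [abs_mul, abs_of_nonneg (Real.rpow_pos_of_pos hu _).le]
    apply mul_le_mul_of_nonneg_right _ (Real.rpow_pos_of_pos hu _).le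
    have h1 : t * Real.sin (t * Real.log u) - α * (1 - Real.cos (t * Real.log u))
        = (α * Real.cos (t * Real.log u) + t * Real.sin (t * Real.log u)) - α := by ring
    rw [h1]
    have h2 : |(α * Real.cos (t * Real.log u) + t * Real.sin (t * Real.log u)) - α|
        ≤ |α * Real.cos (t * Real.log u) + t * Real.sin (t * Real.log u)| + α := by
      rw [sub_eq_add_neg]
      refine (abs_add_le _ _).trans ?_
      rw [abs_neg, abs_of_pos hα0]
    have h3 := habs_trig (t * Real.log u)
    rw [hK]; linarith
  have hCb : ∀ u ∈ Set.Icc w v, |deriv f u| ≤ K * w ^ (-α - 1) := by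
    intro u hu
    have hu0 : 0 < u := lt_of_lt_of_le hw0 hu.1
    rw [hderiv u hu0]
    refine (hf'bound u hu0).trans ?_
    exact mul_le_mul_of_nonneg_left
      (Real.rpow_le_rpow_of_nonpos hw0 hu.1 (by linarith)) hKpos.le
  have key : ∀ (g : ℝ → ℝ), Measurable g → ∀ M2 : ℝ, (∀ u ∈ Set.Icc w v, |g u| ≤ M2) →
      IntervalIntegrable (fun u => deriv f u * g u) volume w v := by
    intro g hg M2 hM2
    rw [intervalIntegrable_iff_integrableOn_Icc_of_le hwv.le]
    apply Measure.integrableOn_of_bounded (M := K * w ^ (-α - 1) * M2) measure_Icc_lt_top.ne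
    · exact ((measurable_deriv f).mul hg).aestronglyMeasurable
    · filter_upwards [ae_restrict_mem measurableSet_Icc] with u hu
      rw [Real.norm_eq_abs, abs_mul]
      exact mul_le_mul (hCb u hu) (hM2 u hu) (abs_nonneg _)
        (mul_nonneg hKpos.le (Real.rpow_pos_of_pos hw0 _).le)
  -- Abel summation
  have hdiff : ∀ u ∈ Set.Icc w v, DifferentiableAt ℝ f u := fun u hu =>
    (hfd u (lt_of_lt_of_le hw0 hu.1)).differentiableAt
  have hint : IntegrableOn (deriv f) (Set.Icc w v) volume := by
    apply IntegrableOn.congr_fun hcontf'.integrableOn_Icc ?_ measurableSet_Icc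
    intro u hu
    exact (hderiv u (lt_of_lt_of_le hw0 hu.1)).symm
  have habel := sum_mul_eq_sub_sub_integral_mul cfun hw0.le hwv.le hdiff hint
  simp only [aux_theta_eq] at habel
  rw [aux_sum_eq f v hw0] at habel
  -- sum ≤ W * log v
  have hsum_le : ∑ p ∈ (Finset.range (⌊v⌋₊ + 1)).filter
        (fun p : ℕ => Nat.Prime p ∧ w < (p : ℝ)),
      f p * Real.log p ≤ W α v w t * Real.log v := by
    rw [W, Finset.sum_mul]
    apply Finset.sum_le_sum
    intro p hp
    simp only [Finset.mem_filter, Finset.mem_range] at hp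
    have hp1 : (1:ℝ) ≤ p := by exact_mod_cast hp.2.1.one_lt.le
    have hp0 : (0:ℝ) < p := lt_of_lt_of_le one_pos hp1
    have hpv : (p:ℝ) ≤ v := by
      have h1 : p ≤ ⌊v⌋₊ := Nat.lt_succ_iff.mp hp.1
      calc (p:ℝ) ≤ (⌊v⌋₊ : ℝ) := by exact_mod_cast h1
        _ ≤ v := Nat.floor_le hv0.le
    have hfp : f p = (1 - Real.cos (t * Real.log p)) / (p:ℝ) ^ α := by
      simp only [hf_def]
      rw [Real.rpow_neg hp0.le, div_eq_mul_inv]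
    rw [hfp]
    apply mul_le_mul_of_nonneg_left (Real.log_le_log hp0 hpv)
    apply div_nonneg _ (Real.rpow_pos_of_pos hp0 _).le
    nlinarith [Real.cos_le_one (t * Real.log (p:ℝ))]
  -- integrability
  have hIntid : IntervalIntegrable (fun u => deriv f u * u) volume w v :=
    key (fun u => u) measurable_id v (fun u hu => by
      rw [abs_of_nonneg (by linarith [hu.1] : (0:ℝ) ≤ u)]; exact hu.2)
  have hInt2 : IntervalIntegrable (fun u => deriv f u * (theta u - u)) volume w v :=
    key (fun u => theta u - u) (aux_theta_mono.measurable.sub measurable_id)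
      (2 * Real.sqrt v) (fun u hu => (hθ u hu).trans (by
        have h := Real.sqrt_le_sqrt hu.2; linarith))
  set I1 : ℝ := ∫ u in w..v, f' u * u with hI1
  set I2 : ℝ := ∫ u in w..v, deriv f u * (theta u - u) with hI2
  have hsplit : (∫ u in Set.Ioc w v, deriv f u * theta u) = I1 + I2 := by
    rw [← intervalIntegral.integral_of_le hwv.le]
    have h1 : (∫ u in w..v, deriv f u * theta u)
        = ∫ u in w..v, (deriv f u * u + deriv f u * (theta u - u)) := by
      apply intervalIntegral.integral_congr; intro u _; simp; ring
    rw [h1, intervalIntegral.integral_add hIntid hInt2, hI1, hI2]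
    congr 1
    apply intervalIntegral.integral_congr
    intro u hu
    rw [Set.uIcc_of_le hwv.le] at hu
    simp only
    rw [hderiv u (lt_of_lt_of_le hw0 hu.1)]
  -- FTC for I1
  have hI1eq : I1 = (f v * v - F v) - (f w * w - F w) := by
    rw [hI1]
    apply intervalIntegral.integral_eq_sub_of_hasDerivAt
      (f := fun u => f u * u - F u)
    · intro u hu
      rw [Set.uIcc_of_le hwv.le] at hu
      have hu0 : 0 < u := lt_of_lt_of_le hw0 hu.1
      have h := ((hfd u hu0).mul (hasDerivAt_id' (x := u))).sub (hFd u hu0)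
      refine h.congr_deriv ?_
      ring
    · apply ContinuousOn.intervalIntegrable
      rw [Set.uIcc_of_le hwv.le]
      exact hcontf'.mul continuousOn_id
  -- F in closed form
  have hFu : ∀ u : ℝ, 0 < u → F u = u ^ β / β -
      u ^ β * Real.cos (t * Real.log u - Real.arctan (t / β)) / Real.sqrt (β ^ 2 + t ^ 2) := by
    intro u hu
    rw [hF_def]
    simp only
    rw [show β * (u ^ β * Real.cos (t * Real.log u)) + t * (u ^ β * Real.sin (t * Real.log u))
        = u ^ β * (β * Real.cos (t * Real.log u) + t * Real.sin (t * Real.log u)) by ring,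
      mul_div_assoc, aux_cosdel β t hβ0 (t * Real.log u), mul_div_assoc]
  -- boundary bounds
  have hbound : ∀ u : ℝ, 0 < u → |theta u - u| ≤ 2 * Real.sqrt u →
      |f u * (theta u - u)| ≤ 4 * u ^ (1 / 2 - α) := by
    intro u hu hb
    rw [abs_mul]
    have h1 : |f u| ≤ 2 * u ^ (-α) := by
      rw [hf_def]
      simp only
      rw [abs_mul, abs_of_nonneg (Real.rpow_pos_of_pos hu _).le]
      apply mul_le_mul_of_nonneg_right _ (Real.rpow_pos_of_pos hu _).le
      rw [abs_of_nonneg (by nlinarith [Real.cos_le_one (t * Real.log u)])]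
      nlinarith [Real.neg_one_le_cos (t * Real.log u)]
    have hpowmul : u ^ (-α) * u ^ ((1:ℝ)/2) = u ^ (1 / 2 - α) := by
      rw [← Real.rpow_add hu]; congr 1; ring
    calc |f u| * |theta u - u| ≤ (2 * u ^ (-α)) * (2 * Real.sqrt u) :=
          mul_le_mul h1 hb (abs_nonneg _) (by positivity)
      _ = 4 * (u ^ (-α) * u ^ ((1:ℝ)/2)) := by rw [Real.sqrt_eq_rpow]; ring
      _ = 4 * u ^ (1 / 2 - α) := by rw [hpowmul]
  -- I2 bound
  have hI2bound : |I2| ≤ 2 * K * (w ^ (1 / 2 - α) - v ^ (1 / 2 - α)) / (α - 1 / 2) := by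
    have hptwise : ∀ u ∈ Set.Icc w v,
        |deriv f u * (theta u - u)| ≤ 2 * K * u ^ (-α - 1/2) := by
      intro u hu
      have hu0 : 0 < u := lt_of_lt_of_le hw0 hu.1
      rw [abs_mul, hderiv u hu0]
      calc |f' u| * |theta u - u| ≤ (K * u ^ (-α - 1)) * (2 * Real.sqrt u) :=
            mul_le_mul (hf'bound u hu0) (hθ u hu) (abs_nonneg _)
              (mul_nonneg hKpos.le (Real.rpow_pos_of_pos hu0 _).le)
        _ = 2 * K * (u ^ (-α - 1) * u ^ ((1:ℝ)/2)) := by rw [Real.sqrt_eq_rpow]; ring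
        _ = 2 * K * u ^ (-α - 1/2) := by
            rw [← Real.rpow_add hu0]; congr 1; ring
    have hcont2 : ContinuousOn (fun u : ℝ => 2 * K * u ^ (-α - 1/2)) (Set.Icc w v) :=
      continuousOn_const.mul (continuousOn_id.rpow_const
        (fun u hu => Or.inl (ne_of_gt (lt_of_lt_of_le hw0 hu.1))))
    have h12 : (0:ℝ) < α - 1 / 2 := by linarith
    have hftc : (∫ u in w..v, 2 * K * u ^ (-α - 1/2)) =
        2 * K * (w ^ (1 / 2 - α) - v ^ (1 / 2 - α)) / (α - 1 / 2) := by
      have heq : (∫ u in w..v, 2 * K * u ^ (-α - 1/2)) =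
          (2 * K * v ^ (1 / 2 - α) / (1 / 2 - α)) -
            (2 * K * w ^ (1 / 2 - α) / (1 / 2 - α)) := by
        apply intervalIntegral.integral_eq_sub_of_hasDerivAt
          (f := fun u : ℝ => 2 * K * u ^ (1 / 2 - α) / (1 / 2 - α))
        · intro u hu
          rw [Set.uIcc_of_le hwv.le] at hu
          have hu0 : 0 < u := lt_of_lt_of_le hw0 hu.1
          have hp : HasDerivAt (fun x : ℝ => x ^ (1 / 2 - α))
              ((1 / 2 - α) * u ^ (1 / 2 - α - 1)) u :=
            Real.hasDerivAt_rpow_const (Or.inl hu0.ne')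
          have h := (hp.const_mul (2 * K)).div_const (1 / 2 - α)
          have hne : (1 / 2 - α : ℝ) ≠ 0 := by linarith
          refine h.congr_deriv ?_
          rw [show (1 / 2 - α - 1 : ℝ) = -α - 1/2 by ring, mul_div_assoc,
            mul_div_cancel_left₀ _ hne]
        · apply ContinuousOn.intervalIntegrable
          rw [Set.uIcc_of_le hwv.le]
          exact hcont2
      have hswap : 2 * K * (w ^ (1 / 2 - α) - v ^ (1 / 2 - α)) / (α - 1 / 2)
          = (2 * K * v ^ (1 / 2 - α) - 2 * K * w ^ (1 / 2 - α)) / (1 / 2 - α) := by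
        rw [← neg_div_neg_eq]
        congr 1 <;> ring
      rw [heq, hswap, div_sub_div_same]
    calc |I2| ≤ ∫ u in w..v, |deriv f u * (theta u - u)| :=
          intervalIntegral.abs_integral_le_integral_abs hwv.le
      _ ≤ ∫ u in w..v, 2 * K * u ^ (-α - 1/2) :=
          intervalIntegral.integral_mono_on hwv.le hInt2.abs
            (by apply ContinuousOn.intervalIntegrable; rw [Set.uIcc_of_le hwv.le]; exact hcont2)
            hptwise
      _ = _ := hftc
  -- assemble
  have hδv := hbound v hv0 (hθ v (Set.right_mem_Icc.mpr hwv.le))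
  have hδw := hbound w hw0 (hθ w (Set.left_mem_Icc.mpr hwv.le))
  rw [hsplit] at habel
  have hFmain : F v - F w = (v ^ β - w ^ β) / β -
      (v ^ β * Real.cos (t * Real.log v - Real.arctan (t / β)) -
        w ^ β * Real.cos (t * Real.log w - Real.arctan (t / β))) /
        Real.sqrt (β ^ 2 + t ^ 2) := by
    rw [hFu v hv0, hFu w hw0]; ring
  have h1 : f v * theta v - f w * theta w - (I1 + I2)
      = (F v - F w) + f v * (theta v - v) - f w * (theta w - w) - I2 := by
    rw [hI1eq]; ring
  rw [ge_iff_le]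
  clear_value K f f' F I1 I2
  have step1 : (F v - F w) + f v * (theta v - v) - f w * (theta w - w) - I2
      ≤ W α v w t * Real.log v := by linarith [habel, hsum_le, h1]
  have step2 : -(4 * v ^ (1 / 2 - α)) ≤ f v * (theta v - v) := (abs_le.mp hδv).1
  have step3 : f w * (theta w - w) ≤ 4 * w ^ (1 / 2 - α) := (abs_le.mp hδw).2
  have step4 : I2 ≤ 2 * K * (w ^ (1 / 2 - α) - v ^ (1 / 2 - α)) / (α - 1 / 2) :=
    (abs_le.mp hI2bound).2
  linarith [step1, step2, step3, step4, hFmain]
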